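/- Characterization of the ogre's interpretation: α ∈ ⟦Y*⟧ (i.e., ⊢ Y* : α is derivable) if and only if α = ⊗ᵢ₌₀ⁿ(1 ⊸ αᵢ) for some n ≥ 0 with each αᵢ ∈ ⟦Y*⟧ (where the empty tensor is 1). -/

import Mathlib

-- Computational and parallel types
mutual
  inductive CTy : Type
    | one : CTy
    | tens : CTy → CTy → CTy
    | arr : CTy → PTy → CTy
  inductive PTy : Type
    | ofC : CTy → PTy
    | par : PTy → PTy → PTy
end

-- Type equivalence: AC of ⊗ and ⅋, 1 neutral for ⊗
mutual
  inductive CEq : CTy → CTy → Prop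
    | refl (τ) : CEq τ τ
    | symm : CEq τ ρ → CEq ρ τ
    | trans : CEq τ ρ → CEq ρ σ → CEq τ σ
    | comm (τ ρ) : CEq (.tens τ ρ) (.tens ρ τ)
    | assoc (τ ρ σ) : CEq (.tens (.tens τ ρ) σ) (.tens τ (.tens ρ σ))
    | unit (τ) : CEq (.tens τ .one) τ
    | tensCongr : CEq τ τ' → CEq ρ ρ' → CEq (.tens τ ρ) (.tens τ' ρ')
    | arrCongr : CEq τ τ' → PEq α α' → CEq (.arr τ α) (.arr τ' α')
  inductive PEq : PTy → PTy → Prop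
    | refl (α) : PEq α α
    | symm : PEq α β → PEq β α
    | trans : PEq α β → PEq β γ → PEq α γ
    | comm (α β) : PEq (.par α β) (.par β α)
    | assoc (α β γ) : PEq (.par (.par α β) γ) (.par α (.par β γ))
    | parCongr : PEq α α' → PEq β β' → PEq (.par α β) (.par α' β')
    | ofC : CEq τ τ' → PEq (.ofC τ) (.ofC τ')
end

def Ctx : Type := ℕ → CTy
def Ctx.empty : Ctx := fun _ => CTy.one
def Ctx.tens (Γ Δ : Ctx) : Ctx := fun n => CTy.tens (Γ n) (Δ n)
def Ctx.single (x : ℕ) (τ : CTy) : Ctx := fun n => if n = x then τ else CTy.one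
def Ctx.cons (τ : CTy) (Γ : Ctx) : Ctx := fun n =>
  match n with
  | 0 => τ
  | n+1 => Γ n
def CtxEq (Γ Δ : Ctx) : Prop := ∀ n, CEq (Γ n) (Δ n)

def tensList (l : List CTy) : CTy := l.foldr CTy.tens CTy.one
def tensFin (n : ℕ) (f : Fin n → CTy) : CTy := tensList (List.ofFn f)
def tensCtxFin (n : ℕ) (Δ : Fin n → Ctx) : Ctx := fun x => tensFin n (fun i => Δ i x)

def parList : List PTy → PTy
  | [] => PTy.ofC CTy.one
  | [α] => α
  | α :: β :: rest => PTy.par α (parList (β :: rest))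

def parFin (n : ℕ) (f : Fin n → PTy) : PTy := parList (List.ofFn f)

/-- ⅋ᵏ1 : the par of k copies of 1 (left associated); junk value at 0. -/
def parOnes : ℕ → PTy
  | 0 => PTy.ofC CTy.one
  | 1 => PTy.ofC CTy.one
  | n+2 => PTy.par (parOnes (n+1)) (PTy.ofC CTy.one)

/-- Terms of Λ₊∥ in de Bruijn notation. -/
inductive Tm : Type
  | var : ℕ → Tm
  | lam : Tm → Tm
  | app : Tm → Tm → Tm
  | plus : Tm → Tm → Tm
  | par : Tm → Tm → Tm

def IsValue : Tm → Prop
  | .var _ => True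
  | .lam _ => True
  | _ => False

def IsPar : Tm → Prop
  | .par _ _ => True
  | _ => False

def shiftTm (c : ℕ) : Tm → Tm
  | .var n => if n < c then .var n else .var (n+1)
  | .lam M => .lam (shiftTm (c+1) M)
  | .app M N => .app (shiftTm c M) (shiftTm c N)
  | .plus M N => .plus (shiftTm c M) (shiftTm c N)
  | .par M N => .par (shiftTm c M) (shiftTm c N)

/-- Capture-avoiding substitution `M[V/k]` (de Bruijn). -/
def substTm : Tm → ℕ → Tm → Tm
  | .var n, k, V => if n = k then V else if k < n then .var (n-1) else .var n
  | .lam M, k, V => .lam (substTm M (k+1) (shiftTm 0 V))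
  | .app M N, k, V => .app (substTm M k V) (substTm N k V)
  | .plus M N, k, V => .plus (substTm M k V) (substTm N k V)
  | .par M N, k, V => .par (substTm M k V) (substTm N k V)

def closedUnder : ℕ → Tm → Prop
  | d, .var n => n < d
  | d, .lam M => closedUnder (d+1) M
  | d, .app M N => closedUnder d M ∧ closedUnder d N
  | d, .plus M N => closedUnder d M ∧ closedUnder d N
  | d, .par M N => closedUnder d M ∧ closedUnder d N

def Closed (M : Tm) : Prop := closedUnder 0 M

/-- One-step reduction; the boolean flag records whether a +-reduction is used. -/
inductive Step : Bool → Tm → Tm → Prop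
  | beta {M V} : IsValue V → Step false (.app (.lam M) V) (substTm M 0 V)
  | plusL (M N) : Step true (.plus M N) M
  | plusR (M N) : Step true (.plus M N) N
  | parAppL (M N P) : Step false (.app (.par M N) P) (.par (.app M P) (.app N P))
  | parAppR {V} (M N) : IsValue V → Step false (.app V (.par M N)) (.par (.app V M) (.app V N))
  | parL {b M M'} (N) : Step b M M' → Step b (.par M N) (.par M' N)
  | parR {b N N'} (M) : Step b N N' → Step b (.par M N) (.par M N')
  | appL {b M M'} (N) : Step b M M' → ¬ IsPar M → Step b (.app M N) (.app M' N)
  | appR {b M M' V} : IsValue V → Step b M M' → ¬ IsPar M → Step b (.app V M) (.app V M')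

/-- The two contracta of a single +-redex, reduced in context. -/
inductive PlusPair : Tm → Tm → Tm → Prop
  | base (M N) : PlusPair (.plus M N) M N
  | parL {M M₁ M₂} (N) : PlusPair M M₁ M₂ → PlusPair (.par M N) (.par M₁ N) (.par M₂ N)
  | parR {N N₁ N₂} (M) : PlusPair N N₁ N₂ → PlusPair (.par M N) (.par M N₁) (.par M N₂)
  | appL {M M₁ M₂} (N) : PlusPair M M₁ M₂ → ¬ IsPar M → PlusPair (.app M N) (.app M₁ N) (.app M₂ N)
  | appR {M M₁ M₂ V} : IsValue V → PlusPair M M₁ M₂ → ¬ IsPar M → PlusPair (.app V M) (.app V M₁) (.app V M₂)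

/-- n-step reduction. -/
inductive Steps : ℕ → Tm → Tm → Prop
  | refl (M) : Steps 0 M M
  | head {b M N P n} : Step b M N → Steps n N P → Steps (n+1) M P

/-- A closed term converges iff it reduces to a parallel composition of values. -/
def Converges (M : Tm) : Prop :=
  ∃ (n : ℕ) (V : Tm) (Vs : List Tm), IsValue V ∧ (∀ W ∈ Vs, IsValue W) ∧
    Steps n M (Vs.foldl Tm.par V)

/-- Typing derivations, indexed by the measure |π|. -/
inductive Deriv : Ctx → Tm → PTy → ℕ → Prop
  | ax (x : ℕ) (τ : CTy) : Deriv (Ctx.single x τ) (.var x) (.ofC τ) 0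
  | lamI (n : ℕ) (Δ : Fin n → Ctx) (τ : Fin n → CTy) (α : Fin n → PTy) (ms : Fin n → ℕ)
      (M : Tm) :
      (∀ i, Deriv (Ctx.cons (τ i) (Δ i)) M (α i) (ms i)) →
      Deriv (tensCtxFin n Δ) (.lam M)
        (.ofC (tensFin n (fun i => .arr (τ i) (α i)))) (∑ i, ms i)
  | appE (k : ℕ) (hk : 0 < k) (nf : Fin k → ℕ) (hn : ∀ i, 0 < nf i)
      (τ : ∀ i : Fin k, Fin (nf i) → CTy) (α : ∀ i : Fin k, Fin (nf i) → PTy)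
      (Δ : Ctx) (Γ : Fin k → Ctx) (m0 : ℕ) (ms : Fin k → ℕ) (M N : Tm) :
      Deriv Δ M (parFin k (fun i => .ofC (tensFin (nf i) (fun j => .arr (τ i j) (α i j))))) m0 →
      (∀ i, Deriv (Γ i) N (parFin (nf i) (fun j => .ofC (τ i j))) (ms i)) →
      Deriv (Ctx.tens Δ (tensCtxFin k Γ)) (.app M N)
        (parFin k (fun i => parFin (nf i) (α i)))
        ((m0 + (∑ i, ms i) + (∑ i, 2 * nf i)) - 1)
  | plusL {Δ M α m} (N) : Deriv Δ M α m → Deriv Δ (.plus M N) α (m+1)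
  | plusR {Δ N α m} (M) : Deriv Δ N α m → Deriv Δ (.plus M N) α (m+1)
  | parI {Δ Γ M N α β m m'} : Deriv Δ M α m → Deriv Γ N β m' →
      Deriv (Ctx.tens Δ Γ) (.par M N) (.par α β) (m + m')
  | eqv {Γ Γ' M α α' m} : Deriv Γ M α m → CtxEq Γ Γ' → PEq α α' → Deriv Γ' M α' m

def deltaTm : Tm := .lam (.app (.var 0) (.var 0))
def OmegaTm : Tm := .app deltaTm deltaTm
def Idt : Tm := .lam (.var 0)
def dstarTm : Tm := .lam (.lam (.app (.var 1) (.var 1)))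
def YstarTm : Tm := .app dstarTm dstarTm

/-! ### Infrastructure -/

def parSize : PTy → ℕ
  | .ofC _ => 1
  | .par a b => parSize a + parSize b

def arrowsC : CTy → Multiset (CTy × PTy)
  | .one => 0
  | .tens a b => arrowsC a + arrowsC b
  | .arr τ α => {(τ, α)}

def Rarr (p q : CTy × PTy) : Prop := CEq p.1 q.1 ∧ PEq p.2 q.2

instance : IsTrans (CTy × PTy) Rarr :=
  ⟨fun _ _ _ h1 h2 => ⟨h1.1.trans h2.1, h1.2.trans h2.2⟩⟩
instance : Std.Symm Rarr :=
  ⟨fun _ _ h => ⟨h.1.symm, h.2.symm⟩⟩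

theorem Rarr.refl (p : CTy × PTy) : Rarr p p := ⟨.refl _, .refl _⟩

theorem relArr_refl (s : Multiset (CTy × PTy)) : Multiset.Rel Rarr s s :=
  Multiset.rel_refl_of_refl_on fun x _ => Rarr.refl x

theorem relArr_symm {s t} (h : Multiset.Rel Rarr s t) : Multiset.Rel Rarr t s :=
  Multiset.rel_flip.mp (h.mono fun a _ b _ hr => ⟨hr.1.symm, hr.2.symm⟩)

theorem parSize_pos : ∀ α, 0 < parSize α
  | .ofC _ => by simp [parSize]
  | .par a b => by have := parSize_pos a; simp [parSize]; omega

theorem parSize_one_ofC {α : PTy} (h : parSize α = 1) : ∃ τ, α = .ofC τ := by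
  cases α with
  | ofC τ => exact ⟨τ, rfl⟩
  | par a b => have := parSize_pos a; have := parSize_pos b; simp [parSize] at h; omega

def MC (τ ρ : CTy) : Prop := Multiset.Rel Rarr (arrowsC τ) (arrowsC ρ)
def MP (α β : PTy) : Prop := parSize α = parSize β ∧
  (∀ a b, α = .ofC a → β = .ofC b → CEq a b)

section MasterCases

theorem mcase1 : ∀ τ, MC τ τ := fun _ => relArr_refl _
theorem mcase2 : ∀ {τ ρ}, CEq τ ρ → MC τ ρ → MC ρ τ := fun _ => relArr_symm
theorem mcase3 : ∀ {τ ρ σ}, CEq τ ρ → CEq ρ σ → MC τ ρ → MC ρ σ → MC τ σ :=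
  fun _ _ h1 h2 => h1.trans Rarr h2
theorem mcase4 : ∀ τ ρ, MC (.tens τ ρ) (.tens ρ τ) := by
  intro τ ρ; unfold MC; show Multiset.Rel _ (_ + _) (_ + _)
  rw [add_comm]; exact relArr_refl _
theorem mcase5 : ∀ τ ρ σ, MC (.tens (.tens τ ρ) σ) (.tens τ (.tens ρ σ)) := by
  intro τ ρ σ; unfold MC; show Multiset.Rel _ (_ + _ + _) (_ + (_ + _))
  rw [add_assoc]; exact relArr_refl _
theorem mcase6 : ∀ τ, MC (.tens τ .one) τ := by
  intro τ; unfold MC; show Multiset.Rel _ (_ + 0) _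
  rw [add_zero]; exact relArr_refl _
theorem mcase7 : ∀ {τ τ' ρ ρ'}, CEq τ τ' → CEq ρ ρ' → MC τ τ' → MC ρ ρ' →
    MC (.tens τ ρ) (.tens τ' ρ') := fun _ _ h1 h2 => h1.add h2
theorem mcase8 : ∀ {τ τ'} {α α' : PTy}, CEq τ τ' → PEq α α' → MC τ τ' → MP α α' →
    MC (.arr τ α) (.arr τ' α') := by
  intro τ τ' α α' h1 h2 _ _
  unfold MC; show Multiset.Rel _ ((τ, α) ::ₘ 0) ((τ', α') ::ₘ 0)
  exact .cons ⟨h1, h2⟩ .zero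
theorem pcase1 : ∀ α, MP α α := fun α => ⟨rfl, fun a b h1 h2 => by
  subst h1; cases h2; exact .refl _⟩
theorem pcase2 : ∀ {α β}, PEq α β → MP α β → MP β α := by
  intro α β _ h
  exact ⟨h.1.symm, fun a b h1 h2 => (h.2 b a h2 h1).symm⟩
theorem pcase3 : ∀ {α β γ}, PEq α β → PEq β γ → MP α β → MP β γ → MP α γ := by
  intro α β γ _ _ h1 h2
  refine ⟨h1.1.trans h2.1, fun a b ha hb => ?_⟩
  subst ha; subst hb
  have hb1 : parSize β = 1 := by have := h1.1; simp [parSize] at this; omega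
  obtain ⟨c, rfl⟩ := parSize_one_ofC hb1
  exact (h1.2 a c rfl rfl).trans (h2.2 c b rfl rfl)
theorem pcase4 : ∀ α β, MP (.par α β) (.par β α) := by
  intro α β; exact ⟨by simp [parSize]; omega, by intro a b h; cases h⟩
theorem pcase5 : ∀ α β γ, MP (.par (.par α β) γ) (.par α (.par β γ)) := by
  intro α β γ; exact ⟨by simp [parSize]; omega, by intro a b h; cases h⟩
theorem pcase6 : ∀ {α α' β β'}, PEq α α' → PEq β β' → MP α α' → MP β β' →
    MP (.par α β) (.par α' β') := by
  intro α α' β β' _ _ h1 h2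
  exact ⟨by simp [parSize, h1.1, h2.1], by intro a b h; cases h⟩
theorem pcase7 : ∀ {τ τ'}, CEq τ τ' → MC τ τ' → MP (.ofC τ) (.ofC τ') := by
  intro τ τ' h _
  exact ⟨rfl, fun a b h1 h2 => by cases h1; cases h2; exact h⟩

end MasterCases

theorem masterC {τ ρ} (h : CEq τ ρ) : MC τ ρ :=
  CEq.rec (motive_1 := fun τ ρ _ => MC τ ρ) (motive_2 := fun α β _ => MP α β)
    mcase1 mcase2 mcase3 mcase4 mcase5 mcase6 mcase7 mcase8
    pcase1 pcase2 pcase3 pcase4 pcase5 pcase6 pcase7 h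

theorem masterP {α β} (h : PEq α β) : MP α β :=
  PEq.rec (motive_1 := fun τ ρ _ => MC τ ρ) (motive_2 := fun α β _ => MP α β)
    mcase1 mcase2 mcase3 mcase4 mcase5 mcase6 mcase7 mcase8
    pcase1 pcase2 pcase3 pcase4 pcase5 pcase6 pcase7 h

theorem ceq_arrows {τ ρ} (h : CEq τ ρ) : Multiset.Rel Rarr (arrowsC τ) (arrowsC ρ) := masterC h
theorem peq_parSize {α β} (h : PEq α β) : parSize α = parSize β := (masterP h).1
theorem ofC_inj {a b : CTy} (h : PEq (.ofC a) (.ofC b)) : CEq a b := (masterP h).2 a b rfl rfl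

/-! ### tensList / parList lemmas -/

theorem CtxEq.refl (Γ : Ctx) : CtxEq Γ Γ := fun _ => .refl _
theorem CtxEq.symm {Γ Δ} (h : CtxEq Γ Δ) : CtxEq Δ Γ := fun n => (h n).symm
theorem CtxEq.trans {Γ Δ Θ} (h1 : CtxEq Γ Δ) (h2 : CtxEq Δ Θ) : CtxEq Γ Θ :=
  fun n => (h1 n).trans (h2 n)

@[simp] theorem tensList_nil : tensList [] = .one := rfl
@[simp] theorem tensList_cons (a l) : tensList (a :: l) = .tens a (tensList l) := rfl
@[simp] theorem parFin_one (f : Fin 1 → PTy) : parFin 1 f = f 0 := by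
  simp [parFin, List.ofFn_succ, parList]
@[simp] theorem tensFin_one (f : Fin 1 → CTy) : tensFin 1 f = .tens (f 0) .one := by
  simp [tensFin, List.ofFn_succ, tensList]
@[simp] theorem tensFin_zero (f : Fin 0 → CTy) : tensFin 0 f = .one := by
  simp [tensFin, tensList]

theorem parFin_collapse {k : ℕ} (h : k = 1) (f : Fin k → PTy) :
    parFin k f = f ⟨0, by omega⟩ := by subst h; simp
theorem tensFin_collapse {k : ℕ} (h : k = 1) (f : Fin k → CTy) :
    tensFin k f = .tens (f ⟨0, by omega⟩) .one := by subst h; simp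

theorem ceq_tensList_append (l₁ l₂ : List CTy) :
    CEq (tensList (l₁ ++ l₂)) (.tens (tensList l₁) (tensList l₂)) := by
  induction l₁ with
  | nil => simp; exact (CEq.unit _).symm.trans (CEq.comm _ _)
  | cons a l ih => simpa using ((CEq.refl a).tensCongr ih).trans (CEq.assoc _ _ _).symm

theorem ceq_tensList_congr {l₁ l₂ : List CTy} (h : List.Forall₂ CEq l₁ l₂) :
    CEq (tensList l₁) (tensList l₂) := by
  induction h with
  | nil => exact .refl _
  | cons h _ ih => exact h.tensCongr ih

theorem ceq_tensList_perm {l₁ l₂ : List CTy} (h : l₁.Perm l₂) :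
    CEq (tensList l₁) (tensList l₂) := by
  induction h with
  | nil => exact .refl _
  | cons a _ ih => exact (CEq.refl a).tensCongr ih
  | swap a b l =>
      simp only [tensList_cons]
      exact ((CEq.assoc _ _ _).symm.trans
        (((CEq.comm b a).tensCongr (CEq.refl _)).trans (CEq.assoc _ _ _)))
  | trans _ _ ih1 ih2 => exact ih1.trans ih2

theorem arrowsC_tensList (l : List CTy) :
    arrowsC (tensList l) = (l.map arrowsC).sum := by
  induction l with
  | nil => simp [arrowsC]
  | cons a l ih =>
      simp only [tensList_cons, List.map_cons, List.sum_cons, ← ih]; rfl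

theorem no_arrows_ceq_one : ∀ {τ : CTy}, arrowsC τ = 0 → CEq τ .one
  | .one, _ => .refl _
  | .tens a b, h => by
      simp [arrowsC] at h
      exact ((no_arrows_ceq_one h.1).tensCongr (no_arrows_ceq_one h.2)).trans (CEq.unit _)
  | .arr _ _, h => by simp [arrowsC] at h

theorem ceq_one_arrows {τ : CTy} (h : CEq .one τ) : arrowsC τ = 0 := by
  have := ceq_arrows h
  simpa [arrowsC, Multiset.rel_zero_left] using this

theorem ceq_one_of_ceq_one {τ : CTy} (h : CEq .one τ) : CEq τ .one :=
  no_arrows_ceq_one (ceq_one_arrows h)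

theorem ceq_one_tens {a b : CTy} (h : CEq .one (.tens a b)) :
    CEq a .one ∧ CEq b .one := by
  have := ceq_one_arrows h
  simp [arrowsC] at this
  exact ⟨no_arrows_ceq_one this.1, no_arrows_ceq_one this.2⟩

/-- Turn a type into its arrow components list. -/
def arrowList : CTy → List (CTy × PTy)
  | .one => []
  | .tens a b => arrowList a ++ arrowList b
  | .arr τ α => [(τ, α)]

def arrOf (p : CTy × PTy) : CTy := .arr p.1 p.2

theorem arrowsC_eq_coe : ∀ τ : CTy, arrowsC τ = ↑(arrowList τ)
  | .one => rfl
  | .tens a b => by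
      rw [show arrowsC (.tens a b) = arrowsC a + arrowsC b from rfl,
        arrowsC_eq_coe a, arrowsC_eq_coe b]
      simp [arrowList]
  | .arr t α => by simp [arrowList]; rfl

theorem ceq_arrowList : ∀ τ : CTy, CEq τ (tensList ((arrowList τ).map arrOf))
  | .one => .refl _
  | .tens a b => by
      have iha := ceq_arrowList a; have ihb := ceq_arrowList b
      simp only [arrowList, List.map_append]
      exact (iha.tensCongr ihb).trans (ceq_tensList_append _ _).symm
  | .arr t α => (CEq.unit _).symm

/-! ### Rel on lists, more CEq lemmas -/

theorem list_of_rel {r : α → β → Prop} :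
    ∀ (l : List α) (t : Multiset β), Multiset.Rel r ↑l t →
      ∃ l₂ : List β, t = ↑l₂ ∧ List.Forall₂ r l l₂ := by
  intro l
  induction l with
  | nil => intro t h; rw [Multiset.coe_nil, Multiset.rel_zero_left] at h; exact ⟨[], h, .nil⟩
  | cons a l ih =>
      intro t h
      rw [show ((a :: l : List α) : Multiset α) = a ::ₘ ↑l from rfl,
        Multiset.rel_cons_left] at h
      obtain ⟨b, bs', hr, hrel, rfl⟩ := h
      obtain ⟨l₂, rfl, hf⟩ := ih bs' hrel
      exact ⟨b :: l₂, rfl, .cons hr hf⟩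

theorem ceq_of_rel_arrows {σ : CTy} {LP : List (CTy × PTy)}
    (h : Multiset.Rel Rarr (arrowsC σ) ↑LP) :
    CEq σ (tensList (LP.map arrOf)) := by
  rw [arrowsC_eq_coe] at h
  obtain ⟨l₂, hl₂, hf⟩ := list_of_rel _ _ h
  have hperm : l₂.Perm LP := (Multiset.coe_eq_coe.mp hl₂).symm
  have h1 : List.Forall₂ CEq ((arrowList σ).map arrOf) (l₂.map arrOf) := by
    rw [List.forall₂_map_right_iff, List.forall₂_map_left_iff]
    refine hf.imp ?_
    intro a b hab
    exact hab.1.arrCongr hab.2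
  exact ((ceq_arrowList σ).trans (ceq_tensList_congr h1)).trans
    (ceq_tensList_perm (hperm.map arrOf))
theorem ceq_tensList_one {l : List CTy} (h : ∀ a ∈ l, CEq a .one) :
    CEq (tensList l) .one := by
  induction l with
  | nil => exact .refl _
  | cons a l ih =>
      simp only [tensList_cons]
      exact ((h a (by simp)).tensCongr (ih fun b hb => h b (by simp [hb]))).trans (CEq.unit _)

theorem parSize_parList : ∀ (a : PTy) (l : List PTy),
    parSize (parList (a :: l)) = ((a :: l).map parSize).sum := by
  intro a l
  induction l generalizing a with
  | nil => simp [parList]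
  | cons b l ih => simp [parList, parSize, ih b]

theorem parSize_parFin {k : ℕ} (hk : 0 < k) (F : Fin k → PTy) :
    parSize (parFin k F) = ∑ i, parSize (F i) := by
  obtain ⟨k, rfl⟩ := Nat.exists_eq_succ_of_ne_zero (Nat.pos_iff_ne_zero.mp hk)
  rw [parFin, List.ofFn_succ, parSize_parList, Fin.sum_univ_succ]
  simp [List.map_ofFn, List.sum_ofFn, Function.comp]

theorem parFin_k_eq_one {k : ℕ} (hk : 0 < k) {F : Fin k → PTy} {ρ : CTy}
    (h : PEq (parFin k F) (.ofC ρ)) : k = 1 := by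
  have hs := peq_parSize h
  rw [parSize_parFin hk] at hs
  simp [parSize] at hs
  have hle : k ≤ ∑ i, parSize (F i) := by
    calc k = ∑ _i : Fin k, 1 := by simp
    _ ≤ _ := Finset.sum_le_sum fun i _ => parSize_pos _
  omega

/-! ### Inversion lemmas -/

def tensCtxList (ls : List Ctx) : Ctx := fun x => tensList (ls.map (· x))

theorem var_inv {Γ x α m} (h : Deriv Γ (.var x) α m) :
    ∃ τ, PEq α (.ofC τ) ∧ CtxEq (Ctx.single x τ) Γ ∧ m = 0 := by
  generalize ht : Tm.var x = t at h
  induction h with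
  | ax y τ =>
      cases ht
      exact ⟨τ, .refl _, CtxEq.refl _, rfl⟩
  | eqv h hc hp ih =>
      obtain ⟨τ, h1, h2, h3⟩ := ih ht
      exact ⟨τ, hp.symm.trans h1, h2.trans hc, h3⟩
  | lamI => exact absurd ht (by simp)
  | appE => exact absurd ht (by simp)
  | plusL => exact absurd ht (by simp)
  | plusR => exact absurd ht (by simp)
  | parI => exact absurd ht (by simp)

theorem lam_inv {Γ M α m} (h : Deriv Γ (.lam M) α m) :
    ∃ l : List (Ctx × CTy × PTy × ℕ),
      CtxEq Γ (tensCtxList (l.map (·.1))) ∧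
      PEq α (.ofC (tensList (l.map fun p => .arr p.2.1 p.2.2.1))) ∧
      (∀ p ∈ l, Deriv (Ctx.cons p.2.1 p.1) M p.2.2.1 p.2.2.2) ∧
      m = (l.map (·.2.2.2)).sum := by
  generalize ht : Tm.lam M = t at h
  induction h with
  | ax y τ => exact absurd ht (by simp)
  | lamI n Δ τ α ms M' hd _ =>
      cases ht
      refine ⟨List.ofFn (fun i => (Δ i, τ i, α i, ms i)), ?_, ?_, ?_, ?_⟩
      · intro x
        rw [show tensCtxList ((List.ofFn fun i => (Δ i, τ i, α i, ms i)).map (·.1)) x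
            = tensCtxFin n Δ x from ?_]
        · exact .refl _
        · simp only [tensCtxList, List.map_ofFn, List.map_map, tensCtxFin, tensFin]
          rfl
      · rw [show (List.ofFn fun i => (Δ i, τ i, α i, ms i)).map (fun p => CTy.arr p.2.1 p.2.2.1)
            = List.ofFn (fun i => CTy.arr (τ i) (α i)) from by rw [List.map_ofFn]; rfl]
        exact .refl _
      · intro p hp
        simp only [List.mem_ofFn] at hp
        obtain ⟨i, rfl⟩ := hp
        exact hd i
      · rw [List.map_ofFn, List.sum_ofFn]; rfl
  | appE => exact absurd ht (by simp)
  | plusL => exact absurd ht (by simp)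
  | plusR => exact absurd ht (by simp)
  | parI => exact absurd ht (by simp)
  | eqv h hc hp ih =>
      obtain ⟨l, h1, h2, h3, h4⟩ := ih ht
      exact ⟨l, (CtxEq.symm hc).trans h1, hp.symm.trans h2, h3, h4⟩

theorem app_inv {Γ M N α m} (h : Deriv Γ (.app M N) α m) :
    ∃ (k : ℕ), 0 < k ∧ ∃ (nf : Fin k → ℕ), (∀ i, 0 < nf i) ∧
      ∃ (τ : ∀ i : Fin k, Fin (nf i) → CTy) (αf : ∀ i : Fin k, Fin (nf i) → PTy)
        (Δ : Ctx) (Γf : Fin k → Ctx) (m0 : ℕ) (ms : Fin k → ℕ),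
        PEq α (parFin k (fun i => parFin (nf i) (αf i))) ∧
        CtxEq Γ (Ctx.tens Δ (tensCtxFin k Γf)) ∧
        Deriv Δ M (parFin k (fun i => .ofC (tensFin (nf i) (fun j => .arr (τ i j) (αf i j))))) m0 ∧
        (∀ i, Deriv (Γf i) N (parFin (nf i) (fun j => .ofC (τ i j))) (ms i)) ∧
        m = (m0 + (∑ i, ms i) + (∑ i, 2 * nf i)) - 1 := by
  generalize ht : Tm.app M N = t at h
  induction h with
  | ax y τ => exact absurd ht (by simp)
  | lamI => exact absurd ht (by simp)
  | appE k hk nf hn τ αf Δ Γf m0 ms M' N' hM hN =>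
      cases ht
      exact ⟨k, hk, nf, hn, τ, αf, Δ, Γf, m0, ms, .refl _, CtxEq.refl _, hM, hN, rfl⟩
  | plusL => exact absurd ht (by simp)
  | plusR => exact absurd ht (by simp)
  | parI => exact absurd ht (by simp)
  | eqv h hc hp ih =>
      obtain ⟨k, hk, nf, hn, τ, αf, Δ, Γf, m0, ms, h1, h2, h3, h4, h5⟩ := ih ht
      exact ⟨k, hk, nf, hn, τ, αf, Δ, Γf, m0, ms, hp.symm.trans h1,
        (CtxEq.symm hc).trans h2, h3, h4, h5⟩

/-! ### Building lambda typings from premise lists -/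

theorem ceq_one_components {l : List CTy} (h : CEq .one (tensList l)) :
    ∀ a ∈ l, CEq a .one := by
  intro a ha
  have h0 := ceq_one_arrows h
  rw [arrowsC_tensList] at h0
  have : arrowsC a = 0 := by
    have hm : arrowsC a ∈ l.map arrowsC := List.mem_map_of_mem ha
    exact List.sum_eq_zero_iff.mp h0 _ hm
  exact no_arrows_ceq_one this

theorem ctxeq_cons {τ τ' Γ Γ'} (h : CEq τ τ') (hc : CtxEq Γ Γ') :
    CtxEq (Ctx.cons τ Γ) (Ctx.cons τ' Γ') := by
  intro n; cases n with
  | zero => exact h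
  | succ n => exact hc n

theorem ctxeq_empty_tens {Δ Θ : Ctx} (h : CtxEq Ctx.empty (Ctx.tens Δ Θ)) :
    CtxEq Δ Ctx.empty ∧ CtxEq Θ Ctx.empty :=
  ⟨fun x => (ceq_one_tens (h x)).1, fun x => (ceq_one_tens (h x)).2⟩

theorem ctxeq_empty_tensCtxFin {k} {Γf : Fin k → Ctx}
    (h : CtxEq Ctx.empty (tensCtxFin k Γf)) (i : Fin k) : CtxEq (Γf i) Ctx.empty := by
  intro x
  refine ceq_one_components (l := List.ofFn (fun i => Γf i x)) (h x) _ ?_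
  exact List.mem_ofFn.mpr ⟨i, rfl⟩

theorem ctxeq_empty_tensCtxList {ls : List Ctx}
    (h : CtxEq Ctx.empty (tensCtxList ls)) {Γ} (hΓ : Γ ∈ ls) : CtxEq Γ Ctx.empty := by
  intro x
  exact ceq_one_components (h x) _ (List.mem_map_of_mem hΓ)

theorem lamI_list (L : List (CTy × PTy × ℕ)) (M : Tm)
    (h : ∀ p ∈ L, Deriv (Ctx.cons p.1 Ctx.empty) M p.2.1 p.2.2) :
    Deriv Ctx.empty (.lam M) (.ofC (tensList (L.map fun p => .arr p.1 p.2.1)))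
      ((L.map (·.2.2)).sum) := by
  have hd := Deriv.lamI L.length (fun _ => Ctx.empty) (fun i => (L.get i).1)
    (fun i => (L.get i).2.1) (fun i => (L.get i).2.2) M (fun i => h _ (L.get_mem i))
  have h1 : tensFin L.length (fun i => .arr (L.get i).1 (L.get i).2.1)
      = tensList (L.map fun p => .arr p.1 p.2.1) := by
    rw [tensFin, show (List.ofFn fun i => CTy.arr (L.get i).1 (L.get i).2.1)
      = List.map (fun p => CTy.arr p.1 p.2.1) (List.ofFn L.get) from by
        rw [List.map_ofFn]; rfl, List.ofFn_get]
  have h2 : (∑ i, (L.get i).2.2) = (L.map (·.2.2)).sum := by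
    have he : (L.map (·.2.2)) = List.ofFn (fun i => (L.get i).2.2) := by
      conv_lhs => rw [← List.ofFn_get L]
      rw [List.map_ofFn]; rfl
    rw [he, List.sum_ofFn]
  rw [h1, h2] at hd
  refine hd.eqv ?_ (.refl _)
  intro x
  refine (ceq_tensList_one ?_).symm.symm
  intro a ha
  simp only [tensCtxFin, tensFin] at *
  obtain ⟨i, rfl⟩ := List.mem_ofFn.mp ha
  exact .refl _

/-! ### Combining and splitting value typings -/

def prj (p : Ctx × CTy × PTy × ℕ) : CTy × PTy := (p.2.1, p.2.2.1)

/-- Premises of a lambda typing at empty context, with eqv-normalized contexts. -/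
theorem lam_inv_empty {Γ M α m} (h : Deriv Γ (.lam M) α m) (hΓ : CtxEq Ctx.empty Γ) :
    ∃ l : List (Ctx × CTy × PTy × ℕ),
      PEq α (.ofC (tensList (l.map fun p => .arr p.2.1 p.2.2.1))) ∧
      (∀ p ∈ l, Deriv (Ctx.cons p.2.1 Ctx.empty) M p.2.2.1 p.2.2.2) ∧
      m = (l.map (·.2.2.2)).sum := by
  obtain ⟨l, h1, h2, h3, h4⟩ := lam_inv h
  refine ⟨l, h2, fun p hp => ?_, h4⟩
  have hpe : CtxEq p.1 Ctx.empty :=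
    ctxeq_empty_tensCtxList (hΓ.trans h1) (List.mem_map_of_mem (f := (·.1)) hp)
  exact (h3 p hp).eqv (ctxeq_cons (.refl _) hpe) (.refl _)

theorem combine {M : Tm} {a b : CTy} {m1 m2 : ℕ}
    (h1 : Deriv Ctx.empty (.lam M) (.ofC a) m1)
    (h2 : Deriv Ctx.empty (.lam M) (.ofC b) m2) :
    ∃ m, Deriv Ctx.empty (.lam M) (.ofC (.tens a b)) m := by
  obtain ⟨l1, he1, hd1, _⟩ := lam_inv_empty h1 (CtxEq.refl _)
  obtain ⟨l2, he2, hd2, _⟩ := lam_inv_empty h2 (CtxEq.refl _)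
  refine ⟨_, (lamI_list ((l1 ++ l2).map (·.2)) M ?_).eqv (CtxEq.refl _) (.ofC ?_)⟩
  · intro p hp
    simp only [List.mem_map, List.mem_append] at hp
    obtain ⟨q, hq | hq, rfl⟩ := hp
    · exact hd1 q hq
    · exact hd2 q hq
  · rw [List.map_map, show ((fun p : CTy × PTy × ℕ => CTy.arr p.1 p.2.1) ∘ (·.2))
        = (fun p : Ctx × CTy × PTy × ℕ => CTy.arr p.2.1 p.2.2.1) from rfl,
      List.map_append]
    refine (ceq_tensList_append _ _).trans ?_
    exact ((ofC_inj he1).symm.tensCongr (ofC_inj he2).symm).symm.symm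

theorem combineList {M : Tm} (L : List CTy)
    (h : ∀ a ∈ L, ∃ m, Deriv Ctx.empty (.lam M) (.ofC a) m) :
    ∃ m, Deriv Ctx.empty (.lam M) (.ofC (tensList L)) m := by
  induction L with
  | nil => exact ⟨0, lamI_list [] M (by simp)⟩
  | cons a L ih =>
      obtain ⟨m1, hd1⟩ := h a (by simp)
      obtain ⟨m2, hd2⟩ := ih fun b hb => h b (by simp [hb])
      obtain ⟨m, hd⟩ := combine hd1 hd2
      exact ⟨m, hd⟩

theorem sum_singletons {β γ : Type} (f : β → γ) (l : List β) :
    (l.map (fun a => ({f a} : Multiset γ))).sum = ↑(l.map f) := by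
  induction l with
  | nil => simp
  | cons a l ih => simp [ih]

theorem arrows_rel_records {ρ : CTy} {l : List (Ctx × CTy × PTy × ℕ)}
    (hce : CEq ρ (tensList (l.map fun p => .arr p.2.1 p.2.2.1))) :
    Multiset.Rel (fun x q => Rarr x (prj q)) (arrowsC ρ) ↑l := by
  have h := ceq_arrows hce
  rw [arrowsC_tensList, List.map_map] at h
  have : (List.map (arrowsC ∘ fun p => CTy.arr p.2.1 p.2.2.1) l)
      = List.map (fun p => ({prj p} : Multiset (CTy × PTy))) l := by
    apply List.map_congr_left; intro p _; rfl
  rw [this, sum_singletons prj l] at h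
  rw [show ((l.map prj : List (CTy × PTy)) : Multiset (CTy × PTy))
      = Multiset.map prj ↑l from by simp] at h
  exact Multiset.rel_map_right.mp h

theorem multiset_sum_le_sum {s t : Multiset ℕ} (h : s ≤ t) : s.sum ≤ t.sum := by
  obtain ⟨u, rfl⟩ := Multiset.le_iff_exists_add.mp h
  simp

/-- Extract two disjoint groups of arrows from a lam typing. -/
theorem extract2 {Γ M ρ mm} (h : Deriv Γ (.lam M) (.ofC ρ) mm) (hΓ : CtxEq Ctx.empty Γ)
    {s1 s2 : Multiset (CTy × PTy)} {σ1 σ2 : CTy}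
    (hle : s1 + s2 ≤ arrowsC ρ)
    (h1 : Multiset.Rel Rarr (arrowsC σ1) s1) (h2 : Multiset.Rel Rarr (arrowsC σ2) s2) :
    ∃ m1 m2, m1 + m2 ≤ mm ∧ Deriv Ctx.empty (.lam M) (.ofC σ1) m1 ∧
      Deriv Ctx.empty (.lam M) (.ofC σ2) m2 := by
  obtain ⟨l, he, hd, hm⟩ := lam_inv_empty h hΓ
  have hrel := arrows_rel_records (ofC_inj he)
  obtain ⟨u, hu⟩ := Multiset.le_iff_exists_add.mp hle
  rw [hu, Multiset.rel_add_left] at hrel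
  obtain ⟨t12, tu, h12, _, hlsplit⟩ := hrel
  rw [Multiset.rel_add_left] at h12
  obtain ⟨t1, t2, ht1, ht2, rfl⟩ := h12
  have build : ∀ (s : Multiset (CTy × PTy)) (t : Multiset (Ctx × CTy × PTy × ℕ)) (σ : CTy),
      Multiset.Rel Rarr (arrowsC σ) s →
      Multiset.Rel (fun x q => Rarr x (prj q)) s t → t ≤ ↑l →
      Deriv Ctx.empty (.lam M) (.ofC σ) ((Multiset.map (·.2.2.2) t).sum) := by
    intro s t σ hs hst htle
    have hrel2 : Multiset.Rel Rarr (arrowsC σ) ↑(t.toList.map prj) := by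
      have hmapped : Multiset.Rel Rarr s (Multiset.map prj t) := Multiset.rel_map_right.mpr hst
      have h3 := hs.trans Rarr hmapped
      rwa [show Multiset.map prj t = ↑(t.toList.map prj) from by
        conv_lhs => rw [← Multiset.coe_toList t]
        rw [Multiset.map_coe]] at h3
    have hce := ceq_of_rel_arrows hrel2
    rw [List.map_map] at hce
    have hmem : ∀ p ∈ t.toList, p ∈ l := by
      intro p hp
      rw [Multiset.mem_toList] at hp
      exact Multiset.mem_coe.mp (Multiset.mem_of_le htle hp)
    have hd2 := lamI_list (t.toList.map (·.2)) M ?_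
    · rw [List.map_map, List.map_map] at hd2
      have hms : (t.toList.map ((fun (x : CTy × PTy × ℕ) => x.2.2) ∘ (·.2))).sum
          = (Multiset.map (·.2.2.2) t).sum := by
        conv_rhs => rw [← Multiset.coe_toList t]
        rw [Multiset.map_coe, Multiset.sum_coe]
        rfl
      rw [hms] at hd2
      exact hd2.eqv (CtxEq.refl _) (.ofC hce.symm)
    · intro p hp
      simp only [List.mem_map] at hp
      obtain ⟨q, hq, rfl⟩ := hp
      exact hd q (hmem q hq)
  have hle1 : t1 ≤ ↑l := Multiset.le_iff_exists_add.mpr ⟨t2 + tu, by rw [hlsplit, add_assoc]⟩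
  have hle2 : t2 ≤ ↑l := Multiset.le_iff_exists_add.mpr ⟨t1 + tu, by rw [hlsplit]; rw [add_comm t1 t2, add_assoc]⟩
  refine ⟨_, _, ?_, build s1 t1 σ1 h1 ht1 hle1, build s2 t2 σ2 h2 ht2 hle2⟩
  have h12le : t1 + t2 ≤ ↑l := Multiset.le_iff_exists_add.mpr ⟨tu, hlsplit⟩
  have hmapsle := Multiset.map_le_map (f := (·.2.2.2)) h12le
  have := multiset_sum_le_sum hmapsle
  rw [Multiset.map_add, Multiset.sum_add] at this
  have hml : (Multiset.map (·.2.2.2) (↑l : Multiset (Ctx × CTy × PTy × ℕ))).sum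
      = (l.map (·.2.2.2)).sum := by rw [Multiset.map_coe, Multiset.sum_coe]
  omega

/-! ### Anatomy of Y* typings -/

theorem ceq_tensFin_one (n : ℕ) : CEq (tensFin n (fun _ => .one)) .one := by
  refine ceq_tensList_one ?_
  intro a ha
  obtain ⟨i, rfl⟩ := List.mem_ofFn.mp ha
  exact .refl _

theorem forall₂_ofFn {α β : Type} {R : α → β → Prop} {n : ℕ} {f : Fin n → α} {g : Fin n → β}
    (h : ∀ i, R (f i) (g i)) : List.Forall₂ R (List.ofFn f) (List.ofFn g) := by
  induction n with
  | zero => simp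
  | succ n ih =>
      rw [List.ofFn_succ, List.ofFn_succ]
      exact .cons (h 0) (ih fun i => h i.succ)

theorem ceq_tensFin_congr {n : ℕ} {f g : Fin n → CTy} (h : ∀ i, CEq (f i) (g i)) :
    CEq (tensFin n f) (tensFin n g) :=
  ceq_tensList_congr (forall₂_ofFn h)

/-- First-level anatomy of a typing of Y* in an empty context. -/
theorem ystar_anatomy {Γ α m} (h : Deriv Γ YstarTm α m) (hΓ : CtxEq Ctx.empty Γ) :
    ∃ (δ : CTy) (γ : PTy) (mM mN : ℕ) (ΔM ΓN : Ctx),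
      PEq α γ ∧
      Deriv ΔM dstarTm (.ofC (.tens (.arr δ γ) .one)) mM ∧ CtxEq Ctx.empty ΔM ∧
      Deriv ΓN dstarTm (.ofC δ) mN ∧ CtxEq Ctx.empty ΓN ∧
      m = mM + mN + 1 := by
  rw [show YstarTm = .app dstarTm dstarTm from rfl] at h
  obtain ⟨k, hk, nf, hn, τf, αf, Δ, Γf, m0, ms, hα, hctx, hM, hN, hmeq⟩ := app_inv h
  -- k = 1
  obtain ⟨l, _, hty, _, _⟩ := lam_inv (show Deriv Δ (.lam (.lam (.app (.var 1) (.var 1)))) _ m0 from hM)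
  have hk1 : k = 1 := parFin_k_eq_one hk hty
  subst hk1
  simp only [parFin_one] at hM hα
  -- nf 0 = 1
  have hN0 := hN 0
  obtain ⟨l2, _, hty2, _, _⟩ := lam_inv (show Deriv (Γf 0) (.lam (.lam (.app (.var 1) (.var 1)))) _ (ms 0) from hN0)
  have hnf : nf 0 = 1 := parFin_k_eq_one (hn 0) hty2
  rw [parFin_collapse hnf] at hN0 hα
  rw [tensFin_collapse hnf] at hM
  -- contexts
  have hsplit := ctxeq_empty_tens (hΓ.trans hctx)
  have hΓN := (ctxeq_empty_tensCtxFin hsplit.2.symm 0).symm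
  refine ⟨τf 0 ⟨0, by omega⟩, αf 0 ⟨0, by omega⟩, m0, ms 0, Δ, Γf 0, hα, hM, hsplit.1.symm,
    hN0, hΓN, ?_⟩
  simp only [Fin.sum_univ_one, hnf] at hmeq
  omega

/-- A typing `⊢ λ.M : δ ⊸ γ ⊗ 1` at empty context comes from a single premise. -/
theorem lam_single_arrow {Γ M δ γ mm} (h : Deriv Γ (.lam M) (.ofC (.tens (.arr δ γ) .one)) mm)
    (hΓ : CtxEq Ctx.empty Γ) :
    ∃ τ' β', CEq δ τ' ∧ PEq γ β' ∧ Deriv (Ctx.cons τ' Ctx.empty) M β' mm := by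
  obtain ⟨l, he, hd, hm⟩ := lam_inv_empty h hΓ
  have hrel := arrows_rel_records (ofC_inj he)
  rw [show arrowsC (.tens (.arr δ γ) .one) = (δ, γ) ::ₘ 0 from by
    simp [arrowsC]] at hrel
  rw [Multiset.rel_cons_left] at hrel
  obtain ⟨b, bs', hr, hrest, hsplit⟩ := hrel
  rw [Multiset.rel_zero_left] at hrest
  subst hrest
  have hb : b ∈ l := by
    have : b ∈ (↑l : Multiset _) := by rw [hsplit]; simp
    exact this
  have hlb : l = [b] := by
    have hcard : Multiset.card (↑l : Multiset (Ctx × CTy × PTy × ℕ)) = 1 := by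
      rw [hsplit]; simp
    rw [Multiset.coe_card] at hcard
    cases l with
    | nil => simp at hcard
    | cons a l' =>
        cases l' with
        | nil =>
            simp only [List.length_cons, List.length_nil] at hcard
            simp at hb
            simp [hb]
        | cons c l'' => simp at hcard
  subst hlb
  refine ⟨b.2.1, b.2.2.1, hr.1, hr.2, ?_⟩
  have hd1 := hd b (by simp)
  simp only [List.map_cons, List.map_nil, List.sum_cons, List.sum_nil, add_zero] at hm
  rw [hm]
  exact hd1

theorem ceq_tens_one {a b : CTy} (h1 : CEq a .one) (h2 : CEq b .one) :
    CEq (.tens a b) .one := (h1.tensCongr h2).trans (CEq.unit _)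

/-- Anatomy of a typing of `x x` (de Bruijn: `(var 1) (var 1)`). -/
theorem xx_anatomy {σ Θ ε mj} (h : Deriv (Ctx.cons σ Θ) (.app (.var 1) (.var 1)) ε mj) :
    ∃ δj ζj, PEq ε ζj ∧ CEq σ .one ∧
      CEq (Θ 0) (.tens (.tens (.arr δj ζj) .one) (.tens δj .one)) ∧ mj = 1 := by
  obtain ⟨k, hk, nf, hn, τf, αf, Δ, Γf, m0, ms, hα, hctx, hM, hN, hmeq⟩ := app_inv h
  obtain ⟨ρ1, hp1, hc1, hm0⟩ := var_inv hM
  have hk1 : k = 1 := parFin_k_eq_one hk hp1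
  subst hk1
  simp only [parFin_one] at hα hp1
  obtain ⟨ρ2, hp2, hc2, hms0⟩ := var_inv (hN 0)
  have hnf : nf 0 = 1 := parFin_k_eq_one (hn 0) hp2
  rw [parFin_collapse hnf] at hα hp2
  rw [tensFin_collapse hnf] at hp1
  refine ⟨τf 0 ⟨0, by omega⟩, αf 0 ⟨0, by omega⟩, hα, ?_, ?_, ?_⟩
  · -- σ ≃ 1
    have h0 := hctx 0
    have hΔ0 : CEq (Δ 0) .one := ceq_one_of_ceq_one (by
      have := hc1 0
      simpa [Ctx.single] using this)
    have hΓ0 : CEq ((Γf 0) 0) .one := ceq_one_of_ceq_one (by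
      have := hc2 0
      simpa [Ctx.single] using this)
    refine h0.trans (ceq_tens_one hΔ0 ?_)
    refine (show CEq (tensCtxFin 1 Γf 0) (.tens ((Γf 0) 0) .one) from by
      simp [tensCtxFin]; exact .refl _).trans (ceq_tens_one hΓ0 (.refl _))
  · -- Θ 0
    have h1 := hctx 1
    have hΔ1 : CEq (Δ 1) (.tens (.arr (τf 0 ⟨0, by omega⟩) (αf 0 ⟨0, by omega⟩)) .one) := by
      have := hc1 1
      simp [Ctx.single] at this
      exact this.symm.trans (ofC_inj hp1).symm
    have hΓ1 : CEq ((Γf 0) 1) (τf 0 ⟨0, by omega⟩) := by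
      have := hc2 1
      simp [Ctx.single] at this
      exact this.symm.trans (ofC_inj hp2).symm
    refine h1.trans (hΔ1.tensCongr ?_)
    refine (show CEq (tensCtxFin 1 Γf 1) (.tens ((Γf 0) 1) .one) from by
      simp [tensCtxFin]; exact .refl _).trans (hΓ1.tensCongr (.refl _))
  · simp only [Fin.sum_univ_one, hnf, hm0, hms0] at hmeq
    omega

/-! ### The grammar of the ogre's types -/

inductive Gty : PTy → Prop
  | mk (n : ℕ) (αs : Fin n → PTy) : (∀ i, Gty (αs i)) →
      Gty (.ofC (tensFin n (fun i => .arr .one (αs i))))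
  | eqv {α β} : Gty α → PEq α β → Gty β

theorem Gty_inv {α} (h : Gty α) :
    ∃ (n : ℕ) (αs : Fin n → PTy),
      PEq α (.ofC (tensFin n (fun i => .arr .one (αs i)))) ∧ ∀ i, Gty (αs i) := by
  induction h with
  | mk n αs hG ih => exact ⟨n, αs, .refl _, hG⟩
  | eqv hG hpe ih =>
      obtain ⟨n, αs, h1, h2⟩ := ih
      exact ⟨n, αs, hpe.symm.trans h1, h2⟩

theorem mk_ystar {δj : CTy} {ζj : PTy} {m1 m2 : ℕ}
    (hE : Deriv Ctx.empty dstarTm (.ofC (.tens (.arr δj ζj) .one)) m1)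
    (hF : Deriv Ctx.empty dstarTm (.ofC δj) m2) :
    Deriv Ctx.empty YstarTm ζj (m1 + m2 + 1) := by
  have hM : Deriv Ctx.empty dstarTm
      (parFin 1 (fun _ => .ofC (tensFin 1 (fun _ => .arr δj ζj)))) m1 := by simpa using hE
  have hN : ∀ i : Fin 1, Deriv Ctx.empty dstarTm (parFin 1 (fun _ => .ofC δj)) m2 :=
    fun _ => by simpa using hF
  have hd := Deriv.appE 1 Nat.one_pos (fun _ => 1) (fun _ => Nat.one_pos)
    (fun _ _ => δj) (fun _ _ => ζj) Ctx.empty (fun _ => Ctx.empty) m1 (fun _ => m2)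
    dstarTm dstarTm hM hN
  simp only [parFin_one, Fin.sum_univ_one] at hd
  have hm : m1 + m2 + 2 * 1 - 1 = m1 + m2 + 1 := by omega
  rw [hm] at hd
  refine hd.eqv ?_ (.refl _)
  intro x
  exact ceq_tens_one (.refl _) (by simpa [tensCtxFin, Ctx.empty] using ceq_tens_one (.refl _) (.refl _))

theorem tensList_map_get {β : Type} (L : List β) (f : β → CTy) :
    tensList (L.map f) = tensFin L.length (fun i => f (L.get i)) := by
  rw [tensFin]
  congr 1
  conv_lhs => rw [← List.ofFn_get L]
  rw [List.map_ofFn]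
  rfl

theorem list_sum_extract {M : Type} [AddCommMonoid M] {L : List M} {x} (hx : x ∈ L) :
    ∃ r, L.sum = x + r := by
  obtain ⟨s, t, rfl⟩ := List.append_of_mem hx
  exact ⟨s.sum + t.sum, by rw [List.sum_append, List.sum_cons, add_left_comm]⟩

/-- Forward: every type of Y* lies in the grammar. -/
theorem ystar_G : ∀ (m : ℕ) {Γ : Ctx} {α : PTy},
    Deriv Γ YstarTm α m → CtxEq Ctx.empty Γ → Gty α := by
  intro m
  induction m using Nat.strong_induction_on with
  | _ m IH =>
  intro Γ α h hΓ
  obtain ⟨δ, γ, mM, mN, ΔM, ΓN, hαγ, hE, hEc, hF, hFc, hmeq⟩ := ystar_anatomy h hΓ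
  obtain ⟨τ', β', hδτ, hγβ, P⟩ :=
    lam_single_arrow (show Deriv ΔM (.lam (.lam (.app (.var 1) (.var 1)))) _ mM from hE) hEc
  obtain ⟨lj, hctx, hty, hprem, hmM⟩ :=
    lam_inv (show Deriv _ (.lam (.app (.var 1) (.var 1))) β' mM from P)
  have hx : ∀ i : Fin lj.length, ∃ (δp : CTy) (ζp : PTy),
      PEq (lj.get i).2.2.1 ζp ∧ CEq (lj.get i).2.1 .one ∧
      CEq ((lj.get i).1 0) (.tens (.tens (.arr δp ζp) .one) (.tens δp .one)) ∧
      (lj.get i).2.2.2 = 1 :=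
    fun i => xx_anatomy (hprem _ (lj.get_mem i))
  choose δp ζp hpe hσ hθ hm1 using hx
  -- δ decomposes along the records
  have hδdec : CEq δ (tensList (lj.map (fun p => p.1 0))) := by
    have h0 := hctx 0
    have : tensCtxList (lj.map (·.1)) 0 = tensList (lj.map (fun p => p.1 0)) := by
      simp only [tensCtxList, List.map_map]; rfl
    rw [this] at h0
    exact hδτ.trans h0
  have hδrel := ceq_arrows hδdec
  rw [arrowsC_tensList, List.map_map] at hδrel
  -- each ζp is derivable for Y* with smaller measure, hence in the grammar
  have hG : ∀ i, Gty (ζp i) := by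
    intro i
    -- extract the relevant submultiset of arrowsC δ
    have hmem : arrowsC ((lj.get i).1 0) ∈ lj.map (arrowsC ∘ fun p => p.1 0) :=
      List.mem_map_of_mem (lj.get_mem i)
    obtain ⟨rest, hrest⟩ := list_sum_extract hmem
    rw [hrest, Multiset.rel_add_right] at hδrel
    obtain ⟨sA, sR, hsA, _, hsum⟩ := hδrel
    -- relate tens σ1 σ2 to the record's x-type
    have hcomb : CEq (.tens (.tens (.arr (δp i) (ζp i)) .one) (δp i)) ((lj.get i).1 0) :=
      (((CEq.refl _).tensCongr (CEq.unit (δp i)).symm).trans (hθ i).symm)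
    have hRel : Multiset.Rel Rarr
        (arrowsC (.tens (.arr (δp i) (ζp i)) .one) + arrowsC (δp i)) sA :=
      (ceq_arrows hcomb).trans Rarr (relArr_symm hsA)
    rw [Multiset.rel_add_left] at hRel
    obtain ⟨s1, s2, hs1, hs2, rfl⟩ := hRel
    have hle : s1 + s2 ≤ arrowsC δ := Multiset.le_iff_exists_add.mpr ⟨sR, hsum⟩
    obtain ⟨m1, m2, hm12, hd1, hd2⟩ :=
      extract2 (show Deriv ΓN (.lam (.lam (.app (.var 1) (.var 1)))) (.ofC δ) mN from hF)
        hFc hle hs1 hs2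
    have hY := mk_ystar hd1 hd2
    have hmMpos : 1 ≤ mM := by
      rw [hmM]
      have : (lj.get i).2.2.2 ∈ lj.map (·.2.2.2) := List.mem_map_of_mem (lj.get_mem i)
      rw [hm1 i] at this
      exact List.single_le_sum (fun _ _ => Nat.zero_le _) _ this
    exact IH (m1 + m2 + 1) (by omega) hY (CtxEq.refl _)
  -- assemble
  have hmk := Gty.mk lj.length ζp hG
  refine hmk.eqv ?_
  have hceq : CEq (tensList (lj.map (fun p => .arr p.2.1 p.2.2.1)))
      (tensFin lj.length (fun i => .arr .one (ζp i))) := by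
    rw [tensList_map_get]
    exact ceq_tensFin_congr fun i => (hσ i).arrCongr (hpe i)
  exact (PEq.ofC hceq).symm.trans (hty.symm.trans (hγβ.symm.trans hαγ.symm))

/-- Reverse: every grammar type is derivable for Y*. -/
theorem ystar_of_G {α : PTy} (h : Gty α) : ∃ m, Deriv Ctx.empty YstarTm α m := by
  induction h with
  | eqv hG hpe ih =>
      obtain ⟨m, d⟩ := ih
      exact ⟨m, d.eqv (CtxEq.refl _) hpe⟩
  | mk n αs hG ih =>
      have hx : ∀ i : Fin n, ∃ (δ : CTy) (γ : PTy) (mM mN : ℕ) (ΔM ΓN : Ctx),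
          PEq (αs i) γ ∧
          Deriv ΔM dstarTm (.ofC (.tens (.arr δ γ) .one)) mM ∧ CtxEq Ctx.empty ΔM ∧
          Deriv ΓN dstarTm (.ofC δ) mN ∧ CtxEq Ctx.empty ΓN ∧ True := by
        intro i
        obtain ⟨m, d⟩ := ih i
        obtain ⟨δ, γ, mM, mN, ΔM, ΓN, h1, h2, h3, h4, h5, _⟩ := ystar_anatomy d (CtxEq.refl _)
        exact ⟨δ, γ, mM, mN, ΔM, ΓN, h1, h2, h3, h4, h5, trivial⟩
      choose δi γi mMi mNi ΔMi ΓNi hpei hEi hEci hFi hFci _ using hx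
      set c : Fin n → CTy := fun i => .tens (.tens (.arr (δi i) (γi i)) .one) (δi i) with hc
      -- dstar has the combined type
      have hcomb : ∃ m, Deriv Ctx.empty dstarTm (.ofC (tensList (List.ofFn c))) m := by
        refine combineList _ ?_
        intro a ha
        obtain ⟨i, rfl⟩ := List.mem_ofFn.mp ha
        exact combine ((hEi i).eqv (hEci i).symm (.refl _)) ((hFi i).eqv (hFci i).symm (.refl _))
      obtain ⟨mc, hcombd⟩ := hcomb
      -- inner typings of x x
      have inner : ∀ i : Fin n,
          Deriv (Ctx.cons .one (Ctx.single 0 (c i))) (.app (.var 1) (.var 1)) (αs i) 1 := by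
        intro i
        have hM : Deriv (Ctx.single 1 (.tens (.arr (δi i) (γi i)) .one)) (.var 1)
            (parFin 1 (fun _ => .ofC (tensFin 1 (fun _ => .arr (δi i) (γi i))))) 0 := by
          simpa using Deriv.ax 1 (.tens (.arr (δi i) (γi i)) .one)
        have hN : ∀ _j : Fin 1, Deriv (Ctx.single 1 (δi i)) (.var 1)
            (parFin 1 (fun _ => .ofC (δi i))) 0 := fun _ => by
          simpa using Deriv.ax 1 (δi i)
        have hd := Deriv.appE 1 Nat.one_pos (fun _ => 1) (fun _ => Nat.one_pos)
          (fun _ _ => δi i) (fun _ _ => γi i) _ (fun _ => Ctx.single 1 (δi i)) 0 (fun _ => 0)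
          (.var 1) (.var 1) hM hN
        simp only [parFin_one, Fin.sum_univ_one] at hd
        have hmeq : 0 + 0 + 2 * 1 - 1 = 1 := by omega
        rw [hmeq] at hd
        refine hd.eqv ?_ (hpei i).symm
        intro x
        rcases x with _ | x
        · show CEq (.tens (Ctx.single 1 _ 0) (tensFin 1 fun _ => Ctx.single 1 (δi i) 0)) _
          simp only [Ctx.single, tensFin_one]
          norm_num
          exact ceq_tens_one (.refl _) (ceq_tens_one (.refl _) (.refl _))
        rcases x with _ | x
        · show CEq (.tens (Ctx.single 1 _ 1) (tensFin 1 fun _ => Ctx.single 1 (δi i) 1))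
            (Ctx.single 0 (c i) 0)
          simp only [Ctx.single, tensFin_one]
          norm_num
          exact (CEq.refl _).tensCongr (CEq.unit _)
        · show CEq (.tens (Ctx.single 1 _ (x+2)) (tensFin 1 fun _ => Ctx.single 1 (δi i) (x+2)))
            (Ctx.single 0 (c i) (x+1))
          simp only [Ctx.single, tensFin_one]
          norm_num
          exact ceq_tens_one (.refl _) (ceq_tens_one (.refl _) (.refl _))
      -- inner lambda
      have hlam := Deriv.lamI n (fun i => Ctx.single 0 (c i)) (fun _ => .one) αs (fun _ => 1)
        (.app (.var 1) (.var 1)) inner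
      have hlam2 : Deriv (Ctx.cons (tensFin n c) Ctx.empty) (.lam (.app (.var 1) (.var 1)))
          (.ofC (tensFin n (fun i => .arr .one (αs i)))) (∑ _i : Fin n, 1) := by
        refine hlam.eqv ?_ (.refl _)
        intro x
        rcases x with _ | x
        · exact CEq.refl _
        · exact ceq_tensFin_one n
      -- outer lambda
      have houter := Deriv.lamI 1 (fun _ => Ctx.empty) (fun _ => tensFin n c)
        (fun _ => .ofC (tensFin n (fun i => .arr .one (αs i)))) (fun _ => ∑ _i : Fin n, 1)
        (.lam (.app (.var 1) (.var 1))) (fun _ => hlam2)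
      -- final application
      have hMfin : Deriv (tensCtxFin 1 (fun _ => Ctx.empty)) dstarTm
          (parFin 1 (fun _ => .ofC (tensFin 1 (fun _ =>
            .arr (tensFin n c) (.ofC (tensFin n (fun i => .arr .one (αs i)))))))) (∑ _i : Fin 1, ∑ _i : Fin n, 1) := by
        simpa [dstarTm] using houter
      have hNfin : ∀ _j : Fin 1, Deriv Ctx.empty dstarTm
          (parFin 1 (fun _ => .ofC (tensFin n c))) mc := fun _ => by
        simpa [tensFin] using hcombd
      have hfin := Deriv.appE 1 Nat.one_pos (fun _ => 1) (fun _ => Nat.one_pos)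
        (fun _ _ => tensFin n c) (fun _ _ => .ofC (tensFin n (fun i => .arr .one (αs i))))
        _ (fun _ => Ctx.empty) _ (fun _ => mc) dstarTm dstarTm hMfin hNfin
      simp only [parFin_one] at hfin
      refine ⟨_, hfin.eqv ?_ (.refl _)⟩
      intro x
      exact ceq_tens_one (by simpa [tensCtxFin, Ctx.empty] using ceq_tens_one (.refl _) (.refl _))
        (by simpa [tensCtxFin, Ctx.empty] using ceq_tens_one (.refl _) (.refl _))

theorem ogre_interpretation (α : PTy) :
    (∃ m, Deriv Ctx.empty YstarTm α m) ↔
      ∃ (n : ℕ) (αs : Fin n → PTy),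
        PEq α (.ofC (tensFin n (fun i => .arr .one (αs i)))) ∧
        ∀ i, ∃ m, Deriv Ctx.empty YstarTm (αs i) m := by
  constructor
  · rintro ⟨m, d⟩
    obtain ⟨n, αs, h1, h2⟩ := Gty_inv (ystar_G m d (CtxEq.refl _))
    exact ⟨n, αs, h1, fun i => ystar_of_G (h2 i)⟩
  · rintro ⟨n, αs, h1, h2⟩
    have hG : ∀ i, Gty (αs i) := fun i => by
      obtain ⟨m, d⟩ := h2 i
      exact ystar_G m d (CtxEq.refl _)
    exact ystar_of_G ((Gty.mk n αs hG).eqv h1.symm)
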